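/- Let C > 0 be the constant from the variance upper bound, let A and B ≥ 3 satisfy B²(log B) < A ≤ B³(log B)⁻⁴(log log B)⁻¹, and let 0 < δ < C/3. Then #{a ∈ 𝕃(A) : |N_a(B) − N_a^loc(B)| > B³/(|a|·(log log B)^δ)} ≪ A⁴/(log log A)^δ, where |a| = maxᵢ|aᵢ|. -/

import Mathlib

open Filter MeasureTheory Finset Topology
open scoped ENNReal

noncomputable section

/-- Euclidean norm of an integer quadruple. -/
def znorm (a : Fin 4 → ℤ) : ℝ := Real.sqrt (∑ i, ((a i : ℝ)) ^ 2)

/-- Euclidean norm of a natural-number quadruple. -/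
def pnorm (x : Fin 4 → ℕ) : ℝ := Real.sqrt (∑ i, ((x i : ℝ)) ^ 2)

/-- Sup-norm `|a| = maxᵢ |aᵢ|` of an integer quadruple. -/
def snorm (a : Fin 4 → ℤ) : ℕ := Finset.univ.sup fun i => (a i).natAbs

/-- Min of the absolute values of the coordinates. -/
def minAbs (a : Fin 4 → ℤ) : ℕ := Finset.univ.inf' Finset.univ_nonempty fun i => (a i).natAbs

/-- `a` is primitive: all coordinates nonzero and gcd of the coordinates is 1. -/
def IsPrimitive (a : Fin 4 → ℤ) : Prop := (∀ i, a i ≠ 0) ∧ Finset.univ.gcd a = 1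

/-- `a` is locally solvable: it is primitive, its coordinates are not all of the same
sign, and for every prime `p` the congruence `⟨a,x⟩ ≡ 0 (mod p)` has a solution in the
reduced residues mod `p`. -/
def IsLocSolv (a : Fin 4 → ℤ) : Prop :=
  IsPrimitive a ∧ ¬ ((∀ i, 0 < a i) ∨ (∀ i, a i < 0)) ∧
  ∀ p : ℕ, p.Prime → ∃ x : Fin 4 → (ZMod p)ˣ,
    ∑ i, (a i : ZMod p) * ((x i : (ZMod p)ˣ) : ZMod p) = 0

/-- The set `L(a)` of quadruples of primes solving `⟨a,p⟩ = 0`. -/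
def Lsol (a : Fin 4 → ℤ) : Set (Fin 4 → ℕ) :=
  {p | (∀ i, (p i).Prime) ∧ ∑ i, a i * (p i : ℤ) = 0}

/-- `𝔪(a)`: the minimum of `|p|` over prime solutions `p ∈ L(a)`, and `∞` if there is
no solution. -/
def mfrak (a : Fin 4 → ℤ) : ℝ≥0∞ :=
  ⨅ p ∈ Lsol a, ((Finset.univ.sup p : ℕ) : ℝ≥0∞)

/-- The condition `𝔪(a)³ ≤ |a|·(log |a|)⁴·(log log |a|)`. -/
def SmallSol (a : Fin 4 → ℤ) : Prop :=
  (mfrak a) ^ 3 ≤ ENNReal.ofReal ((snorm a : ℝ) * (Real.log (snorm a)) ^ 4 *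
    Real.log (Real.log (snorm a)))

/-- `𝕃^loc(A)`. -/
def LlocSet (A : ℝ) : Set (Fin 4 → ℤ) := {a | IsLocSolv a ∧ znorm a ≤ A}

/-- `𝕃(A)`. -/
def LSet (A : ℝ) : Set (Fin 4 → ℤ) := {a | IsPrimitive a ∧ znorm a ≤ A}

/-- `𝒫(B)`: quadruples of primes of sup-norm at most `B`. -/
def PP (B : ℝ) : Set (Fin 4 → ℕ) := {x | ∀ i, (x i).Prime ∧ (x i : ℝ) ≤ B}

/-- The counting function `N_a(B)`. -/
def NB (a : Fin 4 → ℤ) (B : ℝ) : ℝ :=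
  (Real.log B) ^ 4 * (Set.ncard {x | x ∈ PP B ∧ ∑ i, a i * (x i : ℤ) = 0} : ℝ)

/-- `w = log log B / log log log B`. -/
def wB (B : ℝ) : ℝ := Real.log (Real.log B) / Real.log (Real.log (Real.log B))

/-- `W = ∏_{p ≤ w} p^(⌈log w/log p⌉ + 1)`. -/
def WB (B : ℝ) : ℕ :=
  ∏ p ∈ Finset.filter Nat.Prime (Finset.range (⌊wB B⌋₊ + 1)),
    p ^ (⌈Real.log (wB B) / Real.log (p : ℝ)⌉₊ + 1)

/-- `rad(W) = ∏_{p ≤ w} p`. -/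
def radWB (B : ℝ) : ℕ :=
  ∏ p ∈ Finset.filter Nat.Prime (Finset.range (⌊wB B⌋₊ + 1)), p

/-- The local counting function `N_a^loc(B)`; the summation condition is
`a ∈ Λ_x^(W) ∩ 𝒞_x^(α)` with `α = log B`. -/
def NlocB (a : Fin 4 → ℤ) (B : ℝ) : ℝ :=
  (Real.log B) ^ 4 * (Real.log B * (WB B : ℝ) / znorm a) *
    ∑ᶠ x ∈ {x : Fin 4 → ℕ | x ∈ PP B ∧ ((WB B : ℤ) ∣ ∑ i, a i * (x i : ℤ)) ∧
      |∑ i, (x i : ℝ) * (a i : ℝ)| ≤ pnorm x * znorm a / (2 * Real.log B)},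
      1 / pnorm x

/-- Gram determinant `‖u‖²‖v‖² − ⟨u,v⟩²` of a pair of real vectors. -/
def gram2 (u v : Fin 4 → ℝ) : ℝ :=
  (∑ i, u i ^ 2) * (∑ i, v i ^ 2) - (∑ i, u i * v i) ^ 2

/-- Determinant of a rank-2 lattice `S ⊆ ℤ⁴`: for such a lattice it is the minimum of
`det(ℤu ⊕ ℤv) = √(‖u‖²‖v‖² − ⟨u,v⟩²)` over linearly independent pairs `u, v ∈ S`
(the minimum being attained precisely at bases of `S`). -/
def latDet2 (S : Set (Fin 4 → ℤ)) : ℝ :=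
  sInf {d : ℝ | ∃ u ∈ S, ∃ v ∈ S,
    (∀ m n : ℤ, m • u + n • v = 0 → m = 0 ∧ n = 0) ∧
    d = Real.sqrt (gram2 (fun i => (u i : ℝ)) (fun i => (v i : ℝ)))}

/-- `det(Λ_x ∩ Λ_y)` for quadruples of primes `x, y`. -/
def detXY (x y : Fin 4 → ℕ) : ℝ :=
  latDet2 {z | (∑ i, (x i : ℤ) * z i) = 0 ∧ (∑ i, (y i : ℤ) * z i) = 0}

/-- `Ω(B)`: pairs of distinct quadruples of primes of size at most `B`. -/
def OmegaB (B : ℝ) : Set ((Fin 4 → ℕ) × (Fin 4 → ℕ)) :=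
  {p | p.1 ∈ PP B ∧ p.2 ∈ PP B ∧ p.1 ≠ p.2}

/-- `E(B)`. -/
def EB (B : ℝ) : ℝ :=
  (Real.log B) ^ 8 * ∑ᶠ p ∈ OmegaB B, 1 / detXY p.1 p.2

/-- `𝒢(x,y)`: the gcd of the 2×2 minors of the matrix with columns `x, y`. -/
def Gcal (x y : Fin 4 → ℕ) : ℤ :=
  Finset.univ.gcd fun q : Fin 4 × Fin 4 =>
    (x q.1 : ℤ) * (y q.2 : ℤ) - (x q.2 : ℤ) * (y q.1 : ℤ)

/-- `Δ(x,y) = ‖x‖‖y‖/det(ℤx ⊕ ℤy)`. -/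
def DeltaXY (x y : Fin 4 → ℕ) : ℝ :=
  pnorm x * pnorm y / Real.sqrt (gram2 (fun i => (x i : ℝ)) (fun i => (y i : ℝ)))

/-- `ℰ_{x,y}(B) = min{1, Δ(x,y)²/α²} + 𝟏[𝒢(x,y) ∤ W/rad(W)]`. -/
def EcalXY (x y : Fin 4 → ℕ) (B : ℝ) : ℝ :=
  min 1 (DeltaXY x y ^ 2 / (Real.log B) ^ 2) +
  (if Gcal x y ∣ ((WB B / radWB B : ℕ) : ℤ) then 0 else 1)

/-- `F(B)`. -/
def FB (B : ℝ) : ℝ :=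
  (Real.log B) ^ 8 * ∑ᶠ p ∈ OmegaB B, EcalXY p.1 p.2 B / detXY p.1 p.2

/-- `ζ(2)`. -/
def zeta2 : ℝ := ∑' n : ℕ, (1 : ℝ) / (n + 1) ^ 2

/-- `{a ∈ ℤ⁴_prim : ‖a‖ ≤ A}` with `ℤ⁴_prim` the tuples of coprime coordinates. -/
def primA (A : ℝ) : Set (Fin 4 → ℤ) := {a | Finset.univ.gcd a = 1 ∧ znorm a ≤ A}

/-- `D(A,B)`. -/
def DAB (A B : ℝ) : ℝ :=
  (∑ᶠ a ∈ primA A, NB a B ^ 2) - (Real.log B) ^ 4 * ∑ᶠ a ∈ primA A, NB a B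

/-- `Δ_a^mix(B)`. -/
def DeltaMix (a : Fin 4 → ℤ) (B : ℝ) : ℝ :=
  (Real.log B) ^ 8 * (Real.log B * (WB B : ℝ) / znorm a) *
    ∑ᶠ x ∈ {x : Fin 4 → ℕ | x ∈ PP B ∧ ∑ i, a i * (x i : ℤ) = 0}, 1 / pnorm x

/-- `Δ_a^loc(B)`. -/
def DeltaLoc (a : Fin 4 → ℤ) (B : ℝ) : ℝ :=
  (Real.log B) ^ 8 * ((Real.log B) ^ 2 * (WB B : ℝ) ^ 2 / znorm a ^ 2) *
    ∑ᶠ x ∈ {x : Fin 4 → ℕ | x ∈ PP B ∧ ((WB B : ℤ) ∣ ∑ i, a i * (x i : ℤ)) ∧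
      |∑ i, (x i : ℝ) * (a i : ℝ)| ≤ pnorm x * znorm a / (2 * Real.log B)},
      1 / pnorm x ^ 2

/-- `D^mix(A,B)`. -/
def DmixAB (A B : ℝ) : ℝ :=
  (∑ᶠ a ∈ primA A, NB a B * NlocB a B) - ∑ᶠ a ∈ primA A, DeltaMix a B

/-- `D^loc(A,B)`. -/
def DlocAB (A B : ℝ) : ℝ :=
  (∑ᶠ a ∈ primA A, NlocB a B ^ 2) - ∑ᶠ a ∈ primA A, DeltaLoc a B

/-- `K(A,B)`. -/
def KAB (A B : ℝ) : ℝ :=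
  ∑ᶠ a ∈ primA A, ((Real.log B) ^ 4 * NB a B + DeltaMix a B + DeltaLoc a B)

/-- `τ(a,γ) = γ·vol({u ∈ 𝓑₄(1) ∩ ℝ⁴₊ : a ∈ 𝒞_u^(γ)})`. -/
def tauA (a : Fin 4 → ℤ) (γ : ℝ) : ℝ :=
  γ * (volume {u : Fin 4 → ℝ | Real.sqrt (∑ i, u i ^ 2) < 1 ∧ (∀ i, 0 < u i) ∧
      |∑ i, u i * (a i : ℝ)| ≤ Real.sqrt (∑ i, u i ^ 2) * znorm a / (2 * γ)}).toReal

/-- The singular integral `𝔍_a(B) = τ(a, log B)`. -/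
def Jfrak (a : Fin 4 → ℤ) (B : ℝ) : ℝ := tauA a (Real.log B)

/-- `σ(a,Q) = (Q/φ(Q)⁴)·#{b ∈ ((ℤ/Qℤ)^*)⁴ : ⟨a,b⟩ ≡ 0 mod Q}`. -/
def sigmaA (a : Fin 4 → ℤ) (Q : ℕ) : ℝ :=
  (Q : ℝ) / (Nat.totient Q : ℝ) ^ 4 *
    (Nat.card {b : Fin 4 → (ZMod Q)ˣ |
      ∑ i, (a i : ZMod Q) * ((b i : (ZMod Q)ˣ) : ZMod Q) = 0} : ℝ)

/-- The truncated singular series `𝔖_a(B) = σ(a, W)`. -/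
def Sfrak (a : Fin 4 → ℤ) (B : ℝ) : ℝ := sigmaA a (WB B)

end


private lemma coord_le_znorm' (a : Fin 4 → ℤ) (i : Fin 4) : |(a i : ℝ)| ≤ znorm a := by
  rw [znorm, ← Real.sqrt_sq_eq_abs]
  exact Real.sqrt_le_sqrt (Finset.single_le_sum (fun j _ => sq_nonneg ((a j : ℝ)))
    (Finset.mem_univ i))

private lemma snorm_le_znorm' (a : Fin 4 → ℤ) : (snorm a : ℝ) ≤ znorm a := by
  obtain ⟨i, -, hi⟩ := Finset.exists_mem_eq_sup Finset.univ Finset.univ_nonempty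
    (fun i => (a i).natAbs)
  have hs : _root_.snorm a = (a i).natAbs := hi
  rw [hs]
  calc ((a i).natAbs : ℝ) = |(a i : ℝ)| := by rw [Nat.cast_natAbs, Int.cast_abs]
  _ ≤ znorm a := coord_le_znorm' a i

private lemma one_le_snorm' {a : Fin 4 → ℤ} (h : Finset.univ.gcd a = 1) : 1 ≤ snorm a := by
  rw [Nat.one_le_iff_ne_zero]
  intro h0
  have hz : ∀ i, a i = 0 := by
    intro i
    have := Finset.le_sup (f := fun i => (a i).natAbs) (Finset.mem_univ i)
    have h0' : (Finset.univ.sup fun i => (a i).natAbs) = 0 := h0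
    simp only [h0', Nat.le_zero] at this
    exact Int.natAbs_eq_zero.mp this
  have : Finset.univ.gcd a = 0 := Finset.gcd_eq_zero_iff.mpr fun i _ => hz i
  rw [h] at this; exact one_ne_zero this

private lemma primA_finite' (A : ℝ) : (primA A).Finite := by
  refine (Set.finite_Icc (fun _ : Fin 4 => -⌈A⌉) (fun _ => ⌈A⌉)).subset ?_
  intro a ha
  have hb : ∀ i, |(a i : ℝ)| ≤ (⌈A⌉ : ℝ) :=
    fun i => (coord_le_znorm' a i).trans (ha.2.trans (Int.le_ceil A))
  have hb' : ∀ i, |a i| ≤ ⌈A⌉ := fun i => by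
    exact_mod_cast (by push_cast; exact hb i : ((|a i| : ℤ) : ℝ) ≤ (⌈A⌉ : ℝ))
  constructor <;> intro i
  · exact neg_le_of_abs_le (hb' i)
  · exact le_of_abs_le (hb' i)

/-- Corollary 2.2: for any `C > 0` for which the variance bound holds and any
`0 < δ < C/3`, the number of `a ∈ 𝕃(A)` with
`|N_a(B) − N_a^loc(B)| > B³/(|a|(log log B)^δ)` is `≪ A⁴/(log log A)^δ`. -/
theorem number_of_bad_approximations :
    ∀ C K : ℝ, 0 < C → 0 < K →
      (∀ A B : ℝ, 3 ≤ B →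
        B ^ 2 * Real.log B < A →
        A ≤ B ^ 3 * ((Real.log B) ^ 4)⁻¹ * (Real.log (Real.log B))⁻¹ →
        ∑ᶠ a ∈ primA A, |NB a B - NlocB a B| ^ 2 ≤
          K * A ^ 2 * B ^ 6 / (Real.log (Real.log B)) ^ C) →
      ∀ δ : ℝ, 0 < δ → δ < C / 3 →
        ∃ K' > (0 : ℝ), ∀ A B : ℝ, 3 ≤ B →
          B ^ 2 * Real.log B < A →
          A ≤ B ^ 3 * ((Real.log B) ^ 4)⁻¹ * (Real.log (Real.log B))⁻¹ →
          (Set.ncard {a | a ∈ primA A ∧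
              B ^ 3 / ((snorm a : ℝ) * (Real.log (Real.log B)) ^ δ) <
                |NB a B - NlocB a B|} : ℝ) ≤
            K' * A ^ 4 / (Real.log (Real.log A)) ^ δ := by
  intro C K hC hK hvar δ hδ hδC
  have h3 : (0:ℝ) < 3 := by norm_num
  set m : ℝ := Real.log (Real.log 3) with hm_def
  have hlog3 : 1 < Real.log 3 := by
    rw [Real.lt_log_iff_exp_lt h3]
    have := Real.exp_one_lt_d9; linarith
  have hm : 0 < m := Real.log_pos hlog3
  have hm1 : m < 1 := by
    have h1 : Real.log 3 < 2 := by
      have := Real.log_lt_sub_one_of_pos h3 (by norm_num); linarith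
    have h2 : (2:ℝ) < Real.exp 1 := by have := Real.exp_one_gt_d9; linarith
    calc m < Real.log (Real.exp 1) :=
      Real.log_lt_log (by linarith) (by linarith)
    _ = 1 := Real.log_exp 1
  have hlogm : Real.log m < 0 := Real.log_neg hm hm1
  set c₁ : ℝ := 3 + (-Real.log m) / Real.log 3 with hc₁_def
  have hc₁ : 1 ≤ c₁ := by
    have : 0 ≤ (-Real.log m) / Real.log 3 :=
      div_nonneg (by linarith) (by linarith)
    rw [hc₁_def]; linarith
  set c₀ : ℝ := 1 + Real.log c₁ / m with hc₀_def
  have hlogc₁ : 0 ≤ Real.log c₁ := Real.log_nonneg hc₁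
  have hc₀ : 1 ≤ c₀ := by
    have : 0 ≤ Real.log c₁ / m := div_nonneg hlogc₁ hm.le
    rw [hc₀_def]; linarith
  refine ⟨K * c₀ ^ δ * m ^ (3 * δ - C),
    mul_pos (mul_pos hK (Real.rpow_pos_of_pos (by linarith) δ))
      (Real.rpow_pos_of_pos hm _), ?_⟩
  intro A B hB hA1 hA2
  set K' : ℝ := K * c₀ ^ δ * m ^ (3 * δ - C) with hK'_def
  set L : ℝ := Real.log (Real.log B) with hL_def
  set LA : ℝ := Real.log (Real.log A) with hLA_def
  -- basic positivity facts
  have hlogB : Real.log 3 ≤ Real.log B := Real.log_le_log h3 hB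
  have hL : m ≤ L := Real.log_le_log (by linarith) hlogB
  have hL0 : 0 < L := lt_of_lt_of_le hm hL
  have hB0 : (0:ℝ) < B := by linarith
  have hA9 : 9 < A := by nlinarith
  have hA0 : (0:ℝ) < A := by linarith
  have hlogA : 1 < Real.log A := by
    calc (1:ℝ) < Real.log 3 := hlog3
    _ ≤ Real.log A := Real.log_le_log h3 (by linarith)
  have hLA0 : 0 < LA := Real.log_pos hlogA
  -- upper bound on LA
  have hAupper : A ≤ B ^ 3 / m := by
    have hp4 : (1:ℝ) ≤ (Real.log B) ^ 4 := by
      have := pow_le_pow_left₀ (zero_le_one) (show (1:ℝ) ≤ Real.log B by linarith) 4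
      simpa using this
    have h1 : ((Real.log B) ^ 4)⁻¹ ≤ 1 := inv_le_one_of_one_le₀ hp4
    have h2 : L⁻¹ ≤ m⁻¹ := (inv_le_inv₀ hL0 hm).mpr hL
    calc A ≤ B ^ 3 * ((Real.log B) ^ 4)⁻¹ * L⁻¹ := hA2
    _ ≤ B ^ 3 * 1 * m⁻¹ := by
        apply mul_le_mul (mul_le_mul le_rfl h1 (by positivity) (by positivity)) h2
          (by positivity) (by positivity)
    _ = B ^ 3 / m := by rw [mul_one, div_eq_mul_inv]
  have hlogA_le : Real.log A ≤ c₁ * Real.log B := by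
    have h1 : Real.log A ≤ Real.log (B ^ 3 / m) :=
      Real.log_le_log hA0 hAupper
    have h2 : Real.log (B ^ 3 / m) = 3 * Real.log B - Real.log m := by
      rw [Real.log_div (pow_pos hB0 3).ne' (ne_of_gt hm), Real.log_pow]
      push_cast; ring
    have h3' : -Real.log m ≤ ((-Real.log m) / Real.log 3) * Real.log B := by
      rw [div_mul_eq_mul_div, le_div_iff₀ (by linarith : (0:ℝ) < Real.log 3)]
      exact mul_le_mul_of_nonneg_left hlogB (by linarith)
    calc Real.log A ≤ 3 * Real.log B - Real.log m := by rw [← h2]; exact h1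
    _ ≤ 3 * Real.log B + ((-Real.log m) / Real.log 3) * Real.log B := by linarith
    _ = c₁ * Real.log B := by rw [hc₁_def]; ring
  have hLA_le : LA ≤ c₀ * L := by
    have h1 : LA ≤ Real.log (c₁ * Real.log B) :=
      Real.log_le_log (by linarith) hlogA_le
    have h2 : Real.log (c₁ * Real.log B) = Real.log c₁ + L := by
      rw [Real.log_mul (by linarith) (ne_of_gt (by linarith : (0:ℝ) < Real.log B))]
    have h3' : Real.log c₁ ≤ (Real.log c₁ / m) * L := by
      rw [div_mul_eq_mul_div, le_div_iff₀ hm]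
      exact mul_le_mul_of_nonneg_left hL hlogc₁
    calc LA ≤ Real.log c₁ + L := by rw [← h2]; exact h1
    _ ≤ (Real.log c₁ / m) * L + 1 * L := by linarith
    _ = c₀ * L := by rw [hc₀_def]; ring
  -- key rpow inequality
  have hkey : K * LA ^ δ * (L ^ δ * L ^ δ) ≤ K' * L ^ C := by
    have h1 : LA ^ δ ≤ c₀ ^ δ * L ^ δ := by
      rw [← Real.mul_rpow (by linarith) hL0.le]
      exact Real.rpow_le_rpow hLA0.le hLA_le hδ.le
    have h2 : L ^ δ * (L ^ δ * L ^ δ) = L ^ (3 * δ - C) * L ^ C := by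
      rw [← Real.rpow_add hL0, ← Real.rpow_add hL0, ← Real.rpow_add hL0]
      ring_nf
    have h3' : L ^ (3 * δ - C) ≤ m ^ (3 * δ - C) :=
      Real.rpow_le_rpow_of_nonpos hm hL (by linarith)
    calc K * LA ^ δ * (L ^ δ * L ^ δ)
        ≤ K * (c₀ ^ δ * L ^ δ) * (L ^ δ * L ^ δ) := by
          apply mul_le_mul_of_nonneg_right _ (by positivity)
          exact mul_le_mul_of_nonneg_left h1 hK.le
    _ = K * c₀ ^ δ * (L ^ δ * (L ^ δ * L ^ δ)) := by ring
    _ = K * c₀ ^ δ * (L ^ (3 * δ - C) * L ^ C) := by rw [h2]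
    _ ≤ K * c₀ ^ δ * (m ^ (3 * δ - C) * L ^ C) := by
          apply mul_le_mul_of_nonneg_left _ (by positivity)
          exact mul_le_mul_of_nonneg_right h3' (Real.rpow_nonneg hL0.le C)
    _ = K' * L ^ C := by rw [hK'_def]; ring
  -- Chebyshev
  set t : ℝ := B ^ 3 / (A * L ^ δ) with ht_def
  have hLδ : (0:ℝ) < L ^ δ := Real.rpow_pos_of_pos hL0 δ
  have ht0 : 0 < t := by positivity
  set f : (Fin 4 → ℤ) → ℝ := fun a => |NB a B - NlocB a B| ^ 2 with hf_def
  set bad := {a | a ∈ primA A ∧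
      B ^ 3 / ((snorm a : ℝ) * L ^ δ) < |NB a B - NlocB a B|} with hbad_def
  have hSfin : (primA A).Finite := primA_finite' A
  have hbadsub : bad ⊆ primA A := fun a ha => ha.1
  have hbadfin : bad.Finite := hSfin.subset hbadsub
  have hkey1 : ∀ a ∈ bad, t ^ 2 ≤ f a := by
    intro a ha
    have hs1 : (1:ℝ) ≤ (snorm a : ℝ) := by exact_mod_cast one_le_snorm' ha.1.1
    have hsA : (snorm a : ℝ) ≤ A := (snorm_le_znorm' a).trans ha.1.2
    have htta : t ≤ B ^ 3 / ((snorm a : ℝ) * L ^ δ) := by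
      have hs0 : (0:ℝ) < (snorm a : ℝ) := by linarith
      rw [ht_def, div_le_div_iff₀ (by positivity) (by positivity)]
      exact mul_le_mul_of_nonneg_left (mul_le_mul_of_nonneg_right hsA hLδ.le)
        (by positivity)
    have hle : t ≤ |NB a B - NlocB a B| := le_of_lt (lt_of_le_of_lt htta ha.2)
    exact pow_le_pow_left₀ ht0.le hle 2
  have hsum : (Set.ncard bad : ℝ) * t ^ 2 ≤ ∑ᶠ a ∈ primA A, f a := by
    rw [← hSfin.coe_toFinset, finsum_mem_coe_finset]
    rw [Set.ncard_eq_toFinset_card bad hbadfin]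
    have hsub : hbadfin.toFinset ⊆ hSfin.toFinset := by
      rw [Set.Finite.toFinset_subset_toFinset]; exact hbadsub
    calc (hbadfin.toFinset.card : ℝ) * t ^ 2
        = ∑ _a ∈ hbadfin.toFinset, t ^ 2 := by
          rw [Finset.sum_const, nsmul_eq_mul]
    _ ≤ ∑ a ∈ hbadfin.toFinset, f a := by
          apply Finset.sum_le_sum
          intro a haF
          exact hkey1 a (hbadfin.mem_toFinset.mp haF)
    _ ≤ ∑ a ∈ hSfin.toFinset, f a := by
          apply Finset.sum_le_sum_of_subset_of_nonneg hsub
          intro a _ _; positivity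
  have h1 : (Set.ncard bad : ℝ) * t ^ 2 ≤ K * A ^ 2 * B ^ 6 / L ^ C :=
    hsum.trans (hvar A B hB hA1 hA2)
  have h2 : K * A ^ 2 * B ^ 6 / L ^ C ≤ (K' * A ^ 4 / LA ^ δ) * t ^ 2 := by
    have hLC : (0:ℝ) < L ^ C := Real.rpow_pos_of_pos hL0 C
    have hLAδ : (0:ℝ) < LA ^ δ := Real.rpow_pos_of_pos hLA0 δ
    rw [ht_def, div_pow, div_mul_div_comm, div_le_div_iff₀ hLC (by positivity)]
    have hmul := mul_le_mul_of_nonneg_right hkey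
      (show (0:ℝ) ≤ A ^ 4 * B ^ 6 by positivity)
    calc K * A ^ 2 * B ^ 6 * (LA ^ δ * (A * L ^ δ) ^ 2)
        = K * LA ^ δ * (L ^ δ * L ^ δ) * (A ^ 4 * B ^ 6) := by ring
    _ ≤ K' * L ^ C * (A ^ 4 * B ^ 6) := hmul
    _ = K' * A ^ 4 * (B ^ 3) ^ 2 * L ^ C := by ring
  have h3'' := h1.trans h2
  calc (Set.ncard bad : ℝ) = (Set.ncard bad : ℝ) * t ^ 2 / t ^ 2 := by
        field_simp
  _ ≤ (K' * A ^ 4 / LA ^ δ) * t ^ 2 / t ^ 2 := by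
        apply div_le_div_of_nonneg_right h3'' (by positivity)
  _ = K' * A ^ 4 / LA ^ δ := by field_simp
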